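/- For the principal part equation D_x⁴D_y²u = Z₄₂(x,y) with continuous right-hand side, the function u(x,y) = Σ_{i=0}^{3}Σ_{j=0}^{1} (x−h₁)^i(y−h₂)^j/(i!j!)·Z_{i,j} + Σ_{j=0}^{1} (y−h₂)^j/j! ∫_{h₁}^{x}(x−μ)³/6·Z_{4,j}(μ)dμ + Σ_{i=0}^{3} (x−h₁)^i/i! ∫_{h₂}^{y}(y−τ)·Z_{i,2}(τ)dτ + ∫_{h₁}^{x}∫_{h₂}^{y} (x−μ)³(y−τ)/6 · Z₄₂(μ,τ)dτdμ satisfies both D_x⁴D_y²u = Z₄₂ and all the non-classical conditions (4). -/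

import Mathlib

open intervalIntegral MeasureTheory

lemma myswap (F : ℝ → ℝ → ℝ) (hF : Continuous fun p : ℝ × ℝ => F p.1 p.2)
    (a b c d : ℝ) :
    ∫ x in a..b, ∫ y in c..d, F x y = ∫ y in c..d, ∫ x in a..b, F x y := by
  have key : ∀ s t : Set ℝ, Bornology.IsBounded s → Bornology.IsBounded t →
      ∫ x in s, ∫ y in t, F x y = ∫ y in t, ∫ x in s, F x y := by
    intro s t hbs hbt
    have hint : Integrable (Function.uncurry F)
        ((volume.restrict s).prod (volume.restrict t)) := by
      rw [Measure.prod_restrict]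
      have hc : IsCompact ((closure s) ×ˢ (closure t)) :=
        (Metric.isCompact_of_isClosed_isBounded isClosed_closure hbs.closure).prod
          (Metric.isCompact_of_isClosed_isBounded isClosed_closure hbt.closure)
      have : IntegrableOn (Function.uncurry F) ((closure s) ×ˢ (closure t)) :=
        (hF.continuousOn).integrableOn_compact hc
      exact this.mono_set (Set.prod_mono subset_closure subset_closure)
    exact MeasureTheory.integral_integral_swap hint
  simp only [intervalIntegral_eq_integral_uIoc]
  have hb1 : Bornology.IsBounded (Set.uIoc a b) := Metric.isBounded_Ioc _ _
  have hb2 : Bornology.IsBounded (Set.uIoc c d) := Metric.isBounded_Ioc _ _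
  rw [MeasureTheory.integral_smul, smul_comm, key _ _ hb1 hb2, ← MeasureTheory.integral_smul]

variable {g : ℝ → ℝ}

lemma hder0 (hg : Continuous g) (a x : ℝ) :
    HasDerivAt (fun x => ∫ t in a..x, g t) (g x) x :=
  (hg.integral_hasStrictDerivAt a x).hasDerivAt

lemma hder1 (hg : Continuous g) (a x : ℝ) :
    HasDerivAt (fun x => ∫ t in a..x, (x - t) * g t) (∫ t in a..x, g t) x := by
  have heq : (fun x => ∫ t in a..x, (x - t) * g t)
      = fun x => x * (∫ t in a..x, g t) - ∫ t in a..x, t * g t := by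
    funext x
    rw [← intervalIntegral.integral_const_mul, ← intervalIntegral.integral_sub
      (f := fun t => x * g t) (g := fun t => t * g t)
      ((continuous_const.mul hg).intervalIntegrable _ _)
      ((continuous_id'.mul hg).intervalIntegrable _ _)]
    congr 1; funext t; ring
  rw [heq]
  have h := ((hasDerivAt_id x).mul (hder0 hg a x)).sub
    (hder0 (continuous_id'.mul hg) a x)
  exact h.congr_deriv (by simp)

lemma hder2 (hg : Continuous g) (a x : ℝ) :
    HasDerivAt (fun x => ∫ t in a..x, (x - t) ^ 2 / 2 * g t)
      (∫ t in a..x, (x - t) * g t) x := by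
  have heq : (fun x => ∫ t in a..x, (x - t) ^ 2 / 2 * g t)
      = fun x => x ^ 2 / 2 * (∫ t in a..x, g t) - x * (∫ t in a..x, t * g t)
          + ∫ t in a..x, t ^ 2 / 2 * g t := by
    funext x
    rw [← intervalIntegral.integral_const_mul, ← intervalIntegral.integral_const_mul,
      ← intervalIntegral.integral_sub, ← intervalIntegral.integral_add]
    · apply intervalIntegral.integral_congr; intro t _; ring
    all_goals apply Continuous.intervalIntegrable; fun_prop
  rw [heq]
  have h := ((((hasDerivAt_pow 2 x).div_const 2).mul (hder0 hg a x)).sub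
      ((hasDerivAt_id x).mul (hder0 (continuous_id'.mul hg) a x))).add
    (hder0 (by fun_prop : Continuous fun t => t ^ 2 / 2 * g t) a x)
  have heq2 : (∫ t in a..x, (x - t) * g t)
      = x * (∫ t in a..x, g t) - ∫ t in a..x, t * g t := by
    rw [← intervalIntegral.integral_const_mul, ← intervalIntegral.integral_sub]
    · apply intervalIntegral.integral_congr; intro t _; ring
    all_goals apply Continuous.intervalIntegrable; fun_prop
  rw [heq2]
  refine h.congr_deriv ?_
  simp only [id_eq, Pi.mul_apply]
  push_cast
  ring

lemma hder3 (hg : Continuous g) (a x : ℝ) :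
    HasDerivAt (fun x => ∫ t in a..x, (x - t) ^ 3 / 6 * g t)
      (∫ t in a..x, (x - t) ^ 2 / 2 * g t) x := by
  have heq : (fun x => ∫ t in a..x, (x - t) ^ 3 / 6 * g t)
      = fun x => x ^ 3 / 6 * (∫ t in a..x, g t) - x ^ 2 / 2 * (∫ t in a..x, t * g t)
          + x * (∫ t in a..x, t ^ 2 / 2 * g t) - ∫ t in a..x, t ^ 3 / 6 * g t := by
    funext x
    rw [← intervalIntegral.integral_const_mul, ← intervalIntegral.integral_const_mul,
      ← intervalIntegral.integral_const_mul,
      ← intervalIntegral.integral_sub, ← intervalIntegral.integral_add,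
      ← intervalIntegral.integral_sub]
    · apply intervalIntegral.integral_congr; intro t _; ring
    all_goals apply Continuous.intervalIntegrable; fun_prop
  rw [heq]
  have h := (((((hasDerivAt_pow 3 x).div_const 6).mul (hder0 hg a x)).sub
      (((hasDerivAt_pow 2 x).div_const 2).mul (hder0 (continuous_id'.mul hg) a x))).add
      ((hasDerivAt_id x).mul
        (hder0 (by fun_prop : Continuous fun t => t ^ 2 / 2 * g t) a x))).sub
    (hder0 (by fun_prop : Continuous fun t => t ^ 3 / 6 * g t) a x)
  have heq2 : (∫ t in a..x, (x - t) ^ 2 / 2 * g t)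
      = x ^ 2 / 2 * (∫ t in a..x, g t) - x * (∫ t in a..x, t * g t)
          + ∫ t in a..x, t ^ 2 / 2 * g t := by
    rw [← intervalIntegral.integral_const_mul, ← intervalIntegral.integral_const_mul,
      ← intervalIntegral.integral_sub, ← intervalIntegral.integral_add]
    · apply intervalIntegral.integral_congr; intro t _; ring
    all_goals apply Continuous.intervalIntegrable; fun_prop
  rw [heq2]
  refine h.congr_deriv ?_
  simp only [id_eq, Pi.mul_apply]
  push_cast
  ring

lemma master (h : ℝ) (c0 c1 c2 c3 : ℝ) (hg : Continuous g) (f : ℝ → ℝ)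
    (hf : f = fun s => c0 + (s - h) * c1 + (s - h) ^ 2 / 2 * c2 + (s - h) ^ 3 / 6 * c3
            + ∫ t in h..s, (s - t) ^ 3 / 6 * g t) :
    (∀ x, iteratedDeriv 4 f x = g x) ∧ f h = c0 ∧ deriv f h = c1 ∧
      iteratedDeriv 2 f h = c2 ∧ iteratedDeriv 3 f h = c3 := by
  have hs : ∀ s : ℝ, HasDerivAt (fun s : ℝ => s - h) 1 s :=
    fun s => (hasDerivAt_id s).sub_const h
  have d1 : deriv f = fun s => c1 + (s - h) * c2 + (s - h) ^ 2 / 2 * c3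
      + ∫ t in h..s, (s - t) ^ 2 / 2 * g t := by
    funext s
    rw [hf]
    have H : HasDerivAt (fun s => c0 + (s - h) * c1 + (s - h) ^ 2 / 2 * c2
        + (s - h) ^ 3 / 6 * c3 + ∫ t in h..s, (s - t) ^ 3 / 6 * g t)
        (c1 + (s - h) * c2 + (s - h) ^ 2 / 2 * c3
          + ∫ t in h..s, (s - t) ^ 2 / 2 * g t) s := by
      have := (((((hasDerivAt_const s c0).add ((hs s).mul_const c1)).add
        ((((hs s).pow 2).div_const 2).mul_const c2)).add
        ((((hs s).pow 3).div_const 6).mul_const c3)).add (hder3 hg h s))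
      refine this.congr_deriv ?_
      push_cast; ring
    exact H.deriv
  have d2 : deriv (fun s => c1 + (s - h) * c2 + (s - h) ^ 2 / 2 * c3
      + ∫ t in h..s, (s - t) ^ 2 / 2 * g t) = fun s => c2 + (s - h) * c3
      + ∫ t in h..s, (s - t) * g t := by
    funext s
    have H : HasDerivAt (fun s => c1 + (s - h) * c2 + (s - h) ^ 2 / 2 * c3
        + ∫ t in h..s, (s - t) ^ 2 / 2 * g t)
        (c2 + (s - h) * c3 + ∫ t in h..s, (s - t) * g t) s := by
      have := ((((hasDerivAt_const s c1).add ((hs s).mul_const c2)).add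
        ((((hs s).pow 2).div_const 2).mul_const c3)).add (hder2 hg h s))
      refine this.congr_deriv ?_
      push_cast; ring
    exact H.deriv
  have d3 : deriv (fun s => c2 + (s - h) * c3 + ∫ t in h..s, (s - t) * g t)
      = fun s => c3 + ∫ t in h..s, g t := by
    funext s
    have H : HasDerivAt (fun s => c2 + (s - h) * c3 + ∫ t in h..s, (s - t) * g t)
        (c3 + ∫ t in h..s, g t) s := by
      have := (((hasDerivAt_const s c2).add ((hs s).mul_const c3)).add (hder1 hg h s))
      refine this.congr_deriv ?_
      ring
    exact H.deriv
  have d4 : deriv (fun s => c3 + ∫ t in h..s, g t) = g := by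
    funext s
    have H : HasDerivAt (fun s => c3 + ∫ t in h..s, g t) (g s) s := by
      have := (hasDerivAt_const s c3).add (hder0 hg h s)
      refine this.congr_deriv ?_
      ring
    exact H.deriv
  refine ⟨?_, ?_, ?_, ?_, ?_⟩
  · intro x
    rw [show (4 : ℕ) = 3 + 1 from rfl, iteratedDeriv_succ,
      show (3 : ℕ) = 2 + 1 from rfl, iteratedDeriv_succ,
      show (2 : ℕ) = 1 + 1 from rfl, iteratedDeriv_succ, iteratedDeriv_one,
      d1, d2, d3, d4]
  · rw [hf]; simp [intervalIntegral.integral_same]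
  · rw [d1]; simp [intervalIntegral.integral_same]
  · rw [show (2 : ℕ) = 1 + 1 from rfl, iteratedDeriv_succ, iteratedDeriv_one, d1, d2]
    simp [intervalIntegral.integral_same]
  · rw [show (3 : ℕ) = 2 + 1 from rfl, iteratedDeriv_succ,
      show (2 : ℕ) = 1 + 1 from rfl, iteratedDeriv_succ, iteratedDeriv_one, d1, d2, d3]
    simp [intervalIntegral.integral_same]


/-- Mixed partial derivative `D_x^i D_y^j u`. -/
noncomputable def Dmix (i j : ℕ) (u : ℝ → ℝ → ℝ) : ℝ → ℝ → ℝ :=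
  fun x y => iteratedDeriv i (fun s => iteratedDeriv j (u s) y) x

/-- The explicit function built from the non-classical data solves the principal-part
equation `D_x⁴D_y²u = Z₄₂` and satisfies all the non-classical conditions (4). -/
theorem stmt17 (h₁ h₂ : ℝ) (Z : ℕ → ℕ → ℝ) (Z4 Z2 : ℕ → ℝ → ℝ) (Z42 : ℝ → ℝ → ℝ)
    (hZ4 : ∀ j ≤ 1, Continuous (Z4 j)) (hZ2 : ∀ i ≤ 3, Continuous (Z2 i))
    (hZ42 : Continuous (fun p : ℝ × ℝ => Z42 p.1 p.2))
    (u : ℝ → ℝ → ℝ)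
    (hu : ∀ x y, u x y =
      (∑ i ∈ Finset.range 4, ∑ j ∈ Finset.range 2,
        (x - h₁) ^ i * (y - h₂) ^ j / ((Nat.factorial i : ℝ) * (Nat.factorial j : ℝ)) * Z i j)
      + (∑ j ∈ Finset.range 2,
        (y - h₂) ^ j / (Nat.factorial j : ℝ) * ∫ μ in h₁..x, (x - μ) ^ 3 / 6 * Z4 j μ)
      + (∑ i ∈ Finset.range 4,
        (x - h₁) ^ i / (Nat.factorial i : ℝ) * ∫ τ in h₂..y, (y - τ) * Z2 i τ)
      + ∫ μ in h₁..x, ∫ τ in h₂..y, (x - μ) ^ 3 * (y - τ) / 6 * Z42 μ τ) :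
    (∀ x y, Dmix 4 2 u x y = Z42 x y) ∧
    (∀ i ≤ 3, ∀ j ≤ 1, Dmix i j u h₁ h₂ = Z i j) ∧
    (∀ j ≤ 1, ∀ x, Dmix 4 j u x h₂ = Z4 j x) ∧
    (∀ i ≤ 3, ∀ y, Dmix i 2 u h₁ y = Z2 i y) := by
  have hZ40 := hZ4 0 (by norm_num)
  have hZ41 := hZ4 1 (by norm_num)
  have hZ20 := hZ2 0 (by norm_num)
  have hZ21 := hZ2 1 (by norm_num)
  have hZ22 := hZ2 2 (by norm_num)
  have hZ23 := hZ2 3 (by norm_num)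
  have hZ42' : ∀ y, Continuous fun μ => Z42 μ y :=
    fun y => hZ42.comp (continuous_id.prodMk continuous_const)
  have hG : ∀ s : ℝ, Continuous fun τ => ∫ μ in h₁..s, (s - μ) ^ 3 / 6 * Z42 μ τ := by
    intro s
    apply intervalIntegral.continuous_parametric_intervalIntegral_of_continuous'
      (f := fun τ μ => (s - μ) ^ 3 / 6 * Z42 μ τ)
    exact (((continuous_const.sub continuous_snd).pow 3).div_const 6).mul
      (hZ42.comp (continuous_snd.prodMk continuous_fst))
  -- closed form of u
  have hE : ∀ s, u s = fun y =>
      (Z 0 0 + (s - h₁) * Z 1 0 + (s - h₁) ^ 2 / 2 * Z 2 0 + (s - h₁) ^ 3 / 6 * Z 3 0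
        + ∫ μ in h₁..s, (s - μ) ^ 3 / 6 * Z4 0 μ)
      + (y - h₂) * (Z 0 1 + (s - h₁) * Z 1 1 + (s - h₁) ^ 2 / 2 * Z 2 1
        + (s - h₁) ^ 3 / 6 * Z 3 1 + ∫ μ in h₁..s, (s - μ) ^ 3 / 6 * Z4 1 μ)
      + ((∫ τ in h₂..y, (y - τ) * Z2 0 τ) + (s - h₁) * (∫ τ in h₂..y, (y - τ) * Z2 1 τ)
        + (s - h₁) ^ 2 / 2 * (∫ τ in h₂..y, (y - τ) * Z2 2 τ)
        + (s - h₁) ^ 3 / 6 * (∫ τ in h₂..y, (y - τ) * Z2 3 τ))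
      + ∫ τ in h₂..y, (y - τ) * ∫ μ in h₁..s, (s - μ) ^ 3 / 6 * Z42 μ τ := by
    intro s; funext y; rw [hu]
    have hsw : (∫ μ in h₁..s, ∫ τ in h₂..y, (s - μ) ^ 3 * (y - τ) / 6 * Z42 μ τ)
        = ∫ τ in h₂..y, (y - τ) * ∫ μ in h₁..s, (s - μ) ^ 3 / 6 * Z42 μ τ := by
      rw [myswap (fun μ τ => (s - μ) ^ 3 * (y - τ) / 6 * Z42 μ τ)
        ((((((continuous_const.sub continuous_fst).pow 3).mul
          (continuous_const.sub continuous_snd)).div_const 6).mul hZ42)) h₁ s h₂ y]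
      apply intervalIntegral.integral_congr; intro τ _
      dsimp only
      rw [← intervalIntegral.integral_const_mul]
      apply intervalIntegral.integral_congr; intro μ _; dsimp only; ring
    rw [hsw]
    norm_num [Finset.sum_range_succ, Nat.factorial]
    ring
  -- first y-derivative
  have hD1 : ∀ s, deriv (u s) = fun y =>
      (Z 0 1 + (s - h₁) * Z 1 1 + (s - h₁) ^ 2 / 2 * Z 2 1 + (s - h₁) ^ 3 / 6 * Z 3 1
        + ∫ μ in h₁..s, (s - μ) ^ 3 / 6 * Z4 1 μ)
      + ((∫ τ in h₂..y, Z2 0 τ) + (s - h₁) * (∫ τ in h₂..y, Z2 1 τ)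
        + (s - h₁) ^ 2 / 2 * (∫ τ in h₂..y, Z2 2 τ)
        + (s - h₁) ^ 3 / 6 * (∫ τ in h₂..y, Z2 3 τ))
      + ∫ τ in h₂..y, ∫ μ in h₁..s, (s - μ) ^ 3 / 6 * Z42 μ τ := by
    intro s
    rw [hE s]
    funext y
    have H : HasDerivAt (fun y =>
        (Z 0 0 + (s - h₁) * Z 1 0 + (s - h₁) ^ 2 / 2 * Z 2 0 + (s - h₁) ^ 3 / 6 * Z 3 0
          + ∫ μ in h₁..s, (s - μ) ^ 3 / 6 * Z4 0 μ)
        + (y - h₂) * (Z 0 1 + (s - h₁) * Z 1 1 + (s - h₁) ^ 2 / 2 * Z 2 1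
          + (s - h₁) ^ 3 / 6 * Z 3 1 + ∫ μ in h₁..s, (s - μ) ^ 3 / 6 * Z4 1 μ)
        + ((∫ τ in h₂..y, (y - τ) * Z2 0 τ) + (s - h₁) * (∫ τ in h₂..y, (y - τ) * Z2 1 τ)
          + (s - h₁) ^ 2 / 2 * (∫ τ in h₂..y, (y - τ) * Z2 2 τ)
          + (s - h₁) ^ 3 / 6 * (∫ τ in h₂..y, (y - τ) * Z2 3 τ))
        + ∫ τ in h₂..y, (y - τ) * ∫ μ in h₁..s, (s - μ) ^ 3 / 6 * Z42 μ τ)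
        ((Z 0 1 + (s - h₁) * Z 1 1 + (s - h₁) ^ 2 / 2 * Z 2 1 + (s - h₁) ^ 3 / 6 * Z 3 1
          + ∫ μ in h₁..s, (s - μ) ^ 3 / 6 * Z4 1 μ)
        + ((∫ τ in h₂..y, Z2 0 τ) + (s - h₁) * (∫ τ in h₂..y, Z2 1 τ)
          + (s - h₁) ^ 2 / 2 * (∫ τ in h₂..y, Z2 2 τ)
          + (s - h₁) ^ 3 / 6 * (∫ τ in h₂..y, Z2 3 τ))
        + ∫ τ in h₂..y, ∫ μ in h₁..s, (s - μ) ^ 3 / 6 * Z42 μ τ) y := by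
      have := (((hasDerivAt_const y
          (Z 0 0 + (s - h₁) * Z 1 0 + (s - h₁) ^ 2 / 2 * Z 2 0 + (s - h₁) ^ 3 / 6 * Z 3 0
            + ∫ μ in h₁..s, (s - μ) ^ 3 / 6 * Z4 0 μ)).add
        (((hasDerivAt_id y).sub_const h₂).mul_const
          (Z 0 1 + (s - h₁) * Z 1 1 + (s - h₁) ^ 2 / 2 * Z 2 1 + (s - h₁) ^ 3 / 6 * Z 3 1
            + ∫ μ in h₁..s, (s - μ) ^ 3 / 6 * Z4 1 μ))).add
        ((((hder1 hZ20 h₂ y).add ((hder1 hZ21 h₂ y).const_mul (s - h₁))).add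
          ((hder1 hZ22 h₂ y).const_mul ((s - h₁) ^ 2 / 2))).add
          ((hder1 hZ23 h₂ y).const_mul ((s - h₁) ^ 3 / 6)))).add
        (hder1 (hG s) h₂ y)
      refine this.congr_deriv ?_
      ring
    exact H.deriv
  -- second y-derivative
  have hD2 : ∀ s, deriv (deriv (u s)) = fun y =>
      Z2 0 y + (s - h₁) * Z2 1 y + (s - h₁) ^ 2 / 2 * Z2 2 y + (s - h₁) ^ 3 / 6 * Z2 3 y
      + ∫ μ in h₁..s, (s - μ) ^ 3 / 6 * Z42 μ y := by
    intro s
    rw [hD1 s]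
    funext y
    have H : HasDerivAt (fun y =>
        (Z 0 1 + (s - h₁) * Z 1 1 + (s - h₁) ^ 2 / 2 * Z 2 1 + (s - h₁) ^ 3 / 6 * Z 3 1
          + ∫ μ in h₁..s, (s - μ) ^ 3 / 6 * Z4 1 μ)
        + ((∫ τ in h₂..y, Z2 0 τ) + (s - h₁) * (∫ τ in h₂..y, Z2 1 τ)
          + (s - h₁) ^ 2 / 2 * (∫ τ in h₂..y, Z2 2 τ)
          + (s - h₁) ^ 3 / 6 * (∫ τ in h₂..y, Z2 3 τ))
        + ∫ τ in h₂..y, ∫ μ in h₁..s, (s - μ) ^ 3 / 6 * Z42 μ τ)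
        (Z2 0 y + (s - h₁) * Z2 1 y + (s - h₁) ^ 2 / 2 * Z2 2 y + (s - h₁) ^ 3 / 6 * Z2 3 y
          + ∫ μ in h₁..s, (s - μ) ^ 3 / 6 * Z42 μ y) y := by
      have := ((hasDerivAt_const y
          (Z 0 1 + (s - h₁) * Z 1 1 + (s - h₁) ^ 2 / 2 * Z 2 1 + (s - h₁) ^ 3 / 6 * Z 3 1
            + ∫ μ in h₁..s, (s - μ) ^ 3 / 6 * Z4 1 μ)).add
        ((((hder0 hZ20 h₂ y).add ((hder0 hZ21 h₂ y).const_mul (s - h₁))).add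
          ((hder0 hZ22 h₂ y).const_mul ((s - h₁) ^ 2 / 2))).add
          ((hder0 hZ23 h₂ y).const_mul ((s - h₁) ^ 3 / 6)))).add
        (hder0 (hG s) h₂ y)
      refine this.congr_deriv ?_
      ring
    exact H.deriv
  -- master applications
  have M2 : ∀ y, (∀ x, iteratedDeriv 4 (fun s => iteratedDeriv 2 (u s) y) x = Z42 x y) ∧
      (fun s => iteratedDeriv 2 (u s) y) h₁ = Z2 0 y ∧
      deriv (fun s => iteratedDeriv 2 (u s) y) h₁ = Z2 1 y ∧
      iteratedDeriv 2 (fun s => iteratedDeriv 2 (u s) y) h₁ = Z2 2 y ∧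
      iteratedDeriv 3 (fun s => iteratedDeriv 2 (u s) y) h₁ = Z2 3 y := by
    intro y
    apply master h₁ (Z2 0 y) (Z2 1 y) (Z2 2 y) (Z2 3 y) (hZ42' y)
    funext s
    rw [show (2 : ℕ) = 1 + 1 from rfl, iteratedDeriv_succ, iteratedDeriv_one, hD2 s]
  have M0 : (∀ x, iteratedDeriv 4 (fun s => iteratedDeriv 0 (u s) h₂) x = Z4 0 x) ∧
      (fun s => iteratedDeriv 0 (u s) h₂) h₁ = Z 0 0 ∧
      deriv (fun s => iteratedDeriv 0 (u s) h₂) h₁ = Z 1 0 ∧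
      iteratedDeriv 2 (fun s => iteratedDeriv 0 (u s) h₂) h₁ = Z 2 0 ∧
      iteratedDeriv 3 (fun s => iteratedDeriv 0 (u s) h₂) h₁ = Z 3 0 := by
    apply master h₁ (Z 0 0) (Z 1 0) (Z 2 0) (Z 3 0) hZ40
    funext s
    simp only [iteratedDeriv_zero]
    rw [hE s]
    simp [intervalIntegral.integral_same]
  have M1 : (∀ x, iteratedDeriv 4 (fun s => iteratedDeriv 1 (u s) h₂) x = Z4 1 x) ∧
      (fun s => iteratedDeriv 1 (u s) h₂) h₁ = Z 0 1 ∧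
      deriv (fun s => iteratedDeriv 1 (u s) h₂) h₁ = Z 1 1 ∧
      iteratedDeriv 2 (fun s => iteratedDeriv 1 (u s) h₂) h₁ = Z 2 1 ∧
      iteratedDeriv 3 (fun s => iteratedDeriv 1 (u s) h₂) h₁ = Z 3 1 := by
    apply master h₁ (Z 0 1) (Z 1 1) (Z 2 1) (Z 3 1) hZ41
    funext s
    simp only [iteratedDeriv_one]
    rw [hD1 s]
    simp [intervalIntegral.integral_same]
  refine ⟨?_, ?_, ?_, ?_⟩
  · intro x y
    exact (M2 y).1 x
  · intro i hi j hj
    interval_cases j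
    · interval_cases i
      · simpa [Dmix, iteratedDeriv_zero] using M0.2.1
      · simpa [Dmix, iteratedDeriv_one] using M0.2.2.1
      · exact M0.2.2.2.1
      · exact M0.2.2.2.2
    · interval_cases i
      · simpa [Dmix, iteratedDeriv_zero] using M1.2.1
      · simpa [Dmix, iteratedDeriv_one] using M1.2.2.1
      · exact M1.2.2.2.1
      · exact M1.2.2.2.2
  · intro j hj x
    interval_cases j
    · exact M0.1 x
    · exact M1.1 x
  · intro i hi y
    interval_cases i
    · simpa [Dmix, iteratedDeriv_zero] using (M2 y).2.1
    · simpa [Dmix, iteratedDeriv_one] using (M2 y).2.2.1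
    · exact (M2 y).2.2.2.1
    · exact (M2 y).2.2.2.2
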